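/- Let $(X,\mathcal{U})$ be a Hausdorff uniform space, $q$ a $\mathcal{U}$-istance, and $\psi\colon X\to\mathbb{R}$ lower semicontinuous, bounded below, with complete sublevel sets. Then for any $\varepsilon>0$ and each $x_0\in X$ with $q(x_0,x_0)=0$ and $\psi(x_0)\le\varepsilon+\inf_X\psi$, there exists $x\in X$ with $\psi(x)\le\psi(x_0)$, $q(x,x_0)\le 1$, and $\psi(x)-\varepsilon q(y,x)<\psi(y)$ for all $y\ne x$. -/

import Mathlib

/-- A sequence is `q`-Cauchy if for each `ε > 0` there is `n₀` such that
`q (x n) (x m) < ε` whenever `n₀ < m < n`. -/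
def QCauchySeq {X : Type*} (q : X → X → ℝ) (x : ℕ → X) : Prop :=
  ∀ ε : ℝ, 0 < ε → ∃ n₀ : ℕ, ∀ m n : ℕ, n₀ < m → m < n → q (x n) (x m) < ε

/-- A `𝒰`-istance on a uniform space `X`. -/
structure IsIstance (X : Type*) [UniformSpace X] (q : X → X → ℝ) : Prop where
  nonneg : ∀ x y, 0 ≤ q x y
  triangle : ∀ x y z : X, q z x ≤ q z y + q y x
  lsc : ∀ x : X, LowerSemicontinuous fun y => q y x
  cauchy : ∀ x : ℕ → X, QCauchySeq q x → CauchySeq x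

open Filter Topology Set Uniformity

lemma IsIstance.eq_of_zero {X : Type*} [UniformSpace X] [T2Space X] {q : X → X → ℝ}
    (hq : IsIstance X q) {a b : X} (hab : q a b = 0) (hba : q b a = 0) : a = b := by
  have haa : q a a = 0 :=
    le_antisymm (by simpa [hab, hba] using hq.triangle a b a) (hq.nonneg a a)
  have hbb : q b b = 0 :=
    le_antisymm (by simpa [hab, hba] using hq.triangle b a b) (hq.nonneg b b)
  set u : ℕ → X := fun n => if Even n then a else b with hu_def
  have hu : QCauchySeq q u := by
    intro ε hε
    refine ⟨0, fun m n _ _ => ?_⟩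
    have : q (u n) (u m) = 0 := by
      by_cases h1 : Even n <;> by_cases h2 : Even m <;>
        simp [hu_def, h1, h2, hab, hba, haa, hbb]
    simpa [this] using hε
  have hc := hq.cauchy u hu
  have ha : Tendsto u atTop (𝓝 a) := by
    refine tendsto_nhds_of_cauchySeq_of_subseq hc (f := fun n : ℕ => 2 * n)
      (tendsto_atTop_mono (fun n => by simp only [id_eq]; omega) tendsto_id) ?_
    have : (u ∘ fun n : ℕ => 2 * n) = fun _ => a := by
      funext n; simp [hu_def, Function.comp]
    rw [this]; exact tendsto_const_nhds
  have hb : Tendsto u atTop (𝓝 b) := by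
    refine tendsto_nhds_of_cauchySeq_of_subseq hc (f := fun n : ℕ => 2 * n + 1)
      (tendsto_atTop_mono (fun n => by simp only [id_eq]; omega) tendsto_id) ?_
    have : (u ∘ fun n : ℕ => 2 * n + 1) = fun _ => b := by
      funext n; simp [hu_def, Function.comp, Nat.even_add_one, parity_simps]
    rw [this]; exact tendsto_const_nhds
  exact tendsto_nhds_unique ha hb

theorem ekeland_variational_principle_ii {X : Type*} [UniformSpace X] [T2Space X]
    (q : X → X → ℝ) (hq : IsIstance X q)
    (ψ : X → ℝ) (hψ : LowerSemicontinuous ψ) (hbd : BddBelow (Set.range ψ))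
    (hcomp : ∀ α : ℝ, IsComplete {z : X | ψ z ≤ α})
    (ε : ℝ) (hε : 0 < ε) (x₀ : X) (hq₀ : q x₀ x₀ = 0)
    (hψ₀ : ψ x₀ ≤ ε + ⨅ z, ψ z) :
    ∃ x : X, ψ x ≤ ψ x₀ ∧ q x x₀ ≤ 1 ∧
      ∀ y, y ≠ x → ψ x - ε * q y x < ψ y := by
  classical
  -- the EVP relation: `R a b` means "b is below a"
  set R : X → X → Prop := fun a b => b = a ∨ ψ b + ε * q b a ≤ ψ a with hR
  have hrefl : ∀ a, R a a := fun a => Or.inl rfl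
  have htrans : ∀ a b c, R a b → R b c → R a c := by
    rintro a b c (rfl | hab) hbc
    · exact hbc
    rcases hbc with rfl | hbc
    · exact Or.inr hab
    · refine Or.inr ?_
      have h3 := hq.triangle a b c
      have h4 := mul_le_mul_of_nonneg_left h3 hε.le
      nlinarith
  have hanti : ∀ a b, R a b → R b a → a = b := by
    rintro a b (rfl | hab) hba
    · rfl
    rcases hba with rfl | hba
    · rfl
    · have hq1 : q b a = 0 :=
        le_antisymm (by nlinarith [hq.nonneg a b, hq.nonneg b a]) (hq.nonneg b a)
      have hq2 : q a b = 0 :=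
        le_antisymm (by nlinarith [hq.nonneg a b, hq.nonneg b a]) (hq.nonneg a b)
      exact hq.eq_of_zero hq2 hq1
  have hmono : ∀ a b, R a b → ψ b ≤ ψ a := by
    rintro a b (rfl | hab)
    · exact le_rfl
    · nlinarith [mul_nonneg hε.le (hq.nonneg b a)]
  -- lower semicontinuity / closedness of the slices
  have hlsc_mul : ∀ c : X, LowerSemicontinuous fun y => ε * q y c := by
    intro c x r hr
    have hr' : r < ε * q x c := hr
    have h2 : r / ε < q x c := (div_lt_iff₀ hε).mpr (by linarith)
    filter_upwards [hq.lsc c x (r / ε) h2] with y hy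
    have h3 := (div_lt_iff₀ hε).mp hy
    show r < ε * q y c
    linarith
  have hSclosed : ∀ c : X, IsClosed {y : X | ψ y + ε * q y c ≤ ψ c} := by
    intro c
    have hl : LowerSemicontinuous fun y => ψ y + ε * q y c := hψ.add (hlsc_mul c)
    exact hl.isClosed_preimage (ψ c)
  letI P : Preorder X :=
    { le := R
      le_refl := hrefl
      le_trans := htrans }
  set s : Set X := {z | R x₀ z} with hs
  have hx₀s : x₀ ∈ s := hrefl x₀
  have hs_sub : ∀ z ∈ s, ψ z ≤ ψ x₀ := fun z hz => hmono _ _ hz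
  -- every nonempty chain in s has a lower bound (an upper bound for ≤)
  have ih : ∀ C ⊆ s, IsChain (· ≤ ·) C → ∀ y₀ ∈ C, ∃ ub ∈ s, ∀ z ∈ C, z ≤ ub := by
    intro C hCs hchain y₀ hy₀
    by_cases hmin : ∃ m ∈ C, ∀ z ∈ C, z ≤ m
    · obtain ⟨m, hm, hub⟩ := hmin
      exact ⟨m, hCs hm, hub⟩
    push_neg at hmin
    have hdesc : ∀ m ∈ C, ∃ z ∈ C, R m z ∧ z ≠ m := by
      intro m hm
      obtain ⟨z, hz, hzm⟩ := hmin m hm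
      have hne : z ≠ m := by rintro rfl; exact hzm (hrefl z)
      rcases hchain hz hm hne with h | h
      · exact absurd h hzm
      · exact ⟨z, hz, h, hne⟩
    set t : ℝ := sInf (ψ '' C) with ht
    have hbddC : BddBelow (ψ '' C) := hbd.mono (Set.image_subset_range ψ C)
    have htle : ∀ z ∈ C, t ≤ ψ z := fun z hz => csInf_le hbddC ⟨z, hz, rfl⟩
    -- key smallness property of tails
    have hsmall : ∀ V ∈ 𝓤 X, ∃ c ∈ C, ∀ p ∈ C, R c p → ∀ r ∈ C, R c r → (p, r) ∈ V := by
      intro V hV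
      by_contra hcon
      push_neg at hcon
      set W := SetRel.symmetrize V with hWdef
      have hW : W ∈ 𝓤 X := symmetrize_mem_uniformity hV
      haveI hWsymm : SetRel.IsSymm W := by rw [hWdef]; infer_instance
      have hWV : W ⊆ V := SetRel.symmetrize_subset_self
      have claim2 : ∀ c, c ∈ C → ∀ δ : ℝ, 0 < δ →
          ∃ a b : X, a ∈ C ∧ b ∈ C ∧ R c a ∧ a ≠ c ∧ R a b ∧ b ≠ a ∧
            ψ a < t + δ ∧ (a, b) ∉ W := by
        intro c hc δ hδ
        obtain ⟨y', hy'mem, hy'lt⟩ : ∃ y' ∈ ψ '' C, y' < t + δ :=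
          exists_lt_of_csInf_lt (s := ψ '' C) ⟨ψ y₀, ⟨y₀, hy₀, rfl⟩⟩
            (by rw [ht]; linarith)
        obtain ⟨c₁, hc₁, hc₁eq⟩ := hy'mem
        have hψc₁ : ψ c₁ < t + δ := by rw [hc₁eq]; exact hy'lt
        obtain ⟨e, he, hce, hψe⟩ : ∃ e, e ∈ C ∧ R c e ∧ ψ e < t + δ := by
          rcases eq_or_ne c c₁ with rfl | hne
          · exact ⟨c, hc, hrefl c, hψc₁⟩
          rcases hchain hc hc₁ hne with hcc | hcc
          · exact ⟨c₁, hc₁, hcc, hψc₁⟩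
          · exact ⟨c, hc, hrefl c, lt_of_le_of_lt (hmono _ _ hcc) hψc₁⟩
        obtain ⟨e', he', hee', hne'⟩ := hdesc e he
        obtain ⟨p, hp, hep, r, hr, her, hprV⟩ := hcon e' he'
        have hprW : (p, r) ∉ W := fun hmem => hprV (hWV hmem)
        have hpr_ne : p ≠ r := by rintro rfl; exact hprW (refl_mem_uniformity hW)
        have hRce' : R c e' := htrans _ _ _ hce hee'
        have key : ∀ u w : X, u ∈ C → w ∈ C → R e' u → R e' w → (u, w) ∉ W →
            ∃ a b : X, a ∈ C ∧ b ∈ C ∧ R c a ∧ a ≠ c ∧ R a b ∧ b ≠ a ∧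
              ψ a < t + δ ∧ (a, b) ∉ W := by
          intro u w hu hw heu hew huwW
          have hune : u ≠ w := by rintro rfl; exact huwW (refl_mem_uniformity hW)
          rcases hchain hu hw hune with hord | hord
          · -- R u w : w below u, use (u, w)
            have hRca : R c u := htrans _ _ _ hRce' heu
            have hanc : u ≠ c := by
              rintro rfl
              have h6 : u = e' := hanti u e' hRce' heu
              rw [h6] at hce
              have h7 : e' = e := hanti e' e hce hee'
              exact hne' h7
            have hψa : ψ u < t + δ :=
              lt_of_le_of_lt ((hmono _ _ heu).trans (hmono _ _ hee')) hψe
            exact ⟨u, w, hu, hw, hRca, hanc, hord, hune.symm, hψa, huwW⟩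
          · -- R w u : use (w, u)
            have hwuW : (w, u) ∉ W := fun hmem => huwW (SetRel.symm W hmem)
            have hRca : R c w := htrans _ _ _ hRce' hew
            have hanc : w ≠ c := by
              rintro rfl
              have h6 : w = e' := hanti w e' hRce' hew
              rw [h6] at hce
              have h7 : e' = e := hanti e' e hce hee'
              exact hne' h7
            have hψa : ψ w < t + δ :=
              lt_of_le_of_lt ((hmono _ _ hew).trans (hmono _ _ hee')) hψe
            exact ⟨w, u, hw, hu, hRca, hanc, hord, hune, hψa, hwuW⟩
        exact key p r hp hr hep her hprW
      have hδk : ∀ k : ℕ, (0 : ℝ) < (1 / 2) ^ k := fun k => by positivity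
      choose fA fB hfact using claim2
      let v : ℕ → {c : X // c ∈ C} := fun n =>
        Nat.rec (⟨y₀, hy₀⟩ : {c : X // c ∈ C})
          (fun k p => ⟨fB p.1 p.2 ((1 / 2 : ℝ) ^ k) (hδk k),
            (hfact p.1 p.2 ((1 / 2 : ℝ) ^ k) (hδk k)).2.1⟩) n
      let A : ℕ → X := fun k => fA (v k).1 (v k).2 ((1 / 2 : ℝ) ^ k) (hδk k)
      let B : ℕ → X := fun k => fB (v k).1 (v k).2 ((1 / 2 : ℝ) ^ k) (hδk k)
      have hfa : ∀ k, A k ∈ C ∧ B k ∈ C ∧ R (v k).1 (A k) ∧ A k ≠ (v k).1 ∧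
          R (A k) (B k) ∧ B k ≠ A k ∧ ψ (A k) < t + (1 / 2) ^ k ∧ (A k, B k) ∉ W :=
        fun k => hfact (v k).1 (v k).2 ((1 / 2 : ℝ) ^ k) (hδk k)
      have hvB : ∀ k, (v (k + 1)).1 = B k := fun k => rfl
      let d : ℕ → X := fun n => if Even n then A (n / 2) else B (n / 2)
      have hda : ∀ k, d (2 * k) = A k := by
        intro k
        have h2 : Even (2 * k) := ⟨k, by ring⟩
        have h3 : 2 * k / 2 = k := by omega
        simp only [d, h2, if_pos, h3]
      have hdb : ∀ k, d (2 * k + 1) = B k := by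
        intro k
        have h2 : ¬ Even (2 * k + 1) := by rw [Nat.even_iff]; omega
        have h3 : (2 * k + 1) / 2 = k := by omega
        simp only [d, h2, if_neg, h3, ite_false]
      have hdC : ∀ n, d n ∈ C := by
        intro n
        by_cases h2 : Even n <;> simp only [d, h2, if_pos, if_neg, ite_true, ite_false]
        · exact (hfa (n / 2)).1
        · exact (hfa (n / 2)).2.1
      have hstep : ∀ n, R (d n) (d (n + 1)) ∧ d (n + 1) ≠ d n := by
        intro n
        rcases Nat.even_or_odd n with he | ho
        · obtain ⟨k, hk2⟩ := he
          have hn2 : n = 2 * k := by omega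
          subst hn2
          rw [hda, hdb]
          exact ⟨(hfa k).2.2.2.2.1, (hfa k).2.2.2.2.2.1⟩
        · obtain ⟨k, hk2⟩ := ho
          subst hk2
          have hsucc : 2 * k + 1 + 1 = 2 * (k + 1) := by omega
          rw [hdb, hsucc, hda]
          constructor
          · have := (hfa (k + 1)).2.2.1
            rwa [hvB k] at this
          · have := (hfa (k + 1)).2.2.2.1
            rwa [hvB k] at this
      have hmono_d : ∀ m n, m ≤ n → R (d m) (d n) := by
        intro m n hmn
        induction n, hmn using Nat.le_induction with
        | base => exact hrefl _
        | succ n hn ih2 => exact htrans _ _ _ ih2 (hstep n).1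
      have hne_d : ∀ m n, m < n → d n ≠ d m := by
        intro m n hmn heq
        have h1 : R (d m) (d (m + 1)) := (hstep m).1
        have h2 : R (d (m + 1)) (d n) := hmono_d _ _ hmn
        rw [heq] at h2
        exact (hstep m).2 (hanti _ _ h2 h1)
      have hψub : ∀ k n, 2 * k ≤ n → ψ (d n) < t + (1 / 2) ^ k := by
        intro k n hn
        have h1 : ψ (d n) ≤ ψ (d (2 * k)) := hmono _ _ (hmono_d _ _ hn)
        rw [hda] at h1
        exact lt_of_le_of_lt h1 (hfa k).2.2.2.2.2.2.1
      have hQ : QCauchySeq q d := by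
        intro ε' hε'
        obtain ⟨k, hk⟩ := exists_pow_lt_of_lt_one (mul_pos hε hε')
          (by norm_num : (1 : ℝ) / 2 < 1)
        refine ⟨2 * k, fun m n hm hn => ?_⟩
        have h1 : R (d m) (d n) := hmono_d m n hn.le
        have h2 : d n ≠ d m := hne_d m n hn
        rcases h1 with heq | hineq
        · exact absurd heq h2
        have h4 : ψ (d m) < t + (1 / 2) ^ k := hψub k m (by omega)
        have h5 : t ≤ ψ (d n) := htle _ (hdC n)
        have h6 : ε * q (d n) (d m) < ε * ε' := by nlinarith
        exact lt_of_mul_lt_mul_left h6 hε.le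
      have hCd := hq.cauchy d hQ
      rw [cauchySeq_iff] at hCd
      obtain ⟨N, hN⟩ := hCd W hW
      have hmem := hN (2 * N) (by omega) (2 * N + 1) (by omega)
      rw [hda, hdb] at hmem
      exact (hfa N).2.2.2.2.2.2.2 hmem
    -- build the Cauchy filter of tails
    set T : X → Set X := fun c => {z | z ∈ C ∧ R c z} with hT
    haveI hCne : Nonempty C := ⟨⟨y₀, hy₀⟩⟩
    set F : Filter X := ⨅ c : C, 𝓟 (T c.1) with hF
    have hFle : ∀ c ∈ C, F ≤ 𝓟 (T c) := fun c hc => iInf_le (fun c : C => 𝓟 (T c.1)) ⟨c, hc⟩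
    have hTne : ∀ c ∈ C, (T c).Nonempty := fun c hc => ⟨c, hc, hrefl c⟩
    have hdir : Directed (· ≥ ·) fun c : C => 𝓟 (T c.1) := by
      rintro ⟨c1, hc1⟩ ⟨c2, hc2⟩
      rcases eq_or_ne c1 c2 with rfl | hne
      · exact ⟨⟨c1, hc1⟩, le_rfl, le_rfl⟩
      rcases hchain hc1 hc2 hne with hord | hord
      · exact ⟨⟨c2, hc2⟩, principal_mono.mpr fun z hz => ⟨hz.1, htrans _ _ _ hord hz.2⟩, le_rfl⟩
      · exact ⟨⟨c1, hc1⟩, le_rfl, principal_mono.mpr fun z hz => ⟨hz.1, htrans _ _ _ hord hz.2⟩⟩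
    have hFne : F.NeBot :=
      iInf_neBot_of_directed' hdir fun c => Filter.principal_neBot_iff.mpr (hTne c.1 c.2)
    have hFcauchy : Cauchy F := by
      rw [cauchy_iff]
      refine ⟨hFne, fun V hV => ?_⟩
      obtain ⟨c, hc, hcs⟩ := hsmall V hV
      refine ⟨T c, le_principal_iff.mp (hFle c hc), ?_⟩
      rintro ⟨p, r⟩ hpr
      obtain ⟨hp, hr⟩ := hpr
      exact hcs p hp.1 hp.2 r hr.1 hr.2
    have hFsub : F ≤ 𝓟 {z : X | ψ z ≤ ψ x₀} :=
      (hFle y₀ hy₀).trans (principal_mono.mpr fun z hz => hs_sub _ (hCs hz.1))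
    obtain ⟨z, hzmem, hzle⟩ := hcomp (ψ x₀) F hFcauchy hFsub
    have hzlb : ∀ c ∈ C, R c z := by
      intro c hc
      have hclos : z ∈ closure (T c) := by
        rw [mem_closure_iff_clusterPt]
        exact hFne.mono (le_inf hzle (hFle c hc))
      have hsub2 : closure (T c) ⊆ {y : X | ψ y + ε * q y c ≤ ψ c} ∪ {c} := by
        apply closure_minimal ?_ ((hSclosed c).union isClosed_singleton)
        rintro w ⟨hwC, hw⟩
        rcases hw with heq | hineq
        · right; exact heq
        · left; exact hineq
      rcases hsub2 hclos with h1 | h1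
      · exact Or.inr h1
      · exact Or.inl h1
    exact ⟨z, htrans _ _ _ (hCs hy₀) (hzlb y₀ hy₀), fun w hw => hzlb w hw⟩
  obtain ⟨m, hx₀m, hmmax⟩ := zorn_le_nonempty₀ s ih x₀ hx₀s
  have hx₀m' : R x₀ m := hx₀m
  refine ⟨m, hmono _ _ hx₀m', ?_, ?_⟩
  · rcases hx₀m' with heq | hineq
    · rw [heq, hq₀]; norm_num
    · have hinf : (⨅ z, ψ z) ≤ ψ m := ciInf_le hbd m
      have h7 : ε * q m x₀ ≤ ε * 1 := by linarith
      exact le_of_mul_le_mul_left h7 hε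
  · intro y hy
    by_contra hcon2
    push_neg at hcon2
    have hym : R m y := Or.inr (by linarith)
    have hys : y ∈ s := htrans _ _ _ hx₀m' hym
    have hmy : R y m := hmmax.2 hys hym
    rcases hmy with heq | hineq2
    · exact hy heq.symm
    · rcases hym with heq2 | hineq3
      · exact hy heq2
      · have hq1 : q y m = 0 :=
          le_antisymm (by nlinarith [hq.nonneg m y, hq.nonneg y m]) (hq.nonneg y m)
        have hq2 : q m y = 0 :=
          le_antisymm (by nlinarith [hq.nonneg m y, hq.nonneg y m]) (hq.nonneg m y)
        exact hy (hq.eq_of_zero hq1 hq2)
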